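/- The 1|dⱼ=d|Σ pⱼUⱼ problem with common due date d is equivalent to Subset Sum: the minimum total processing time of tardy jobs equals P − max{s ∈ 𝒮(X) : s ≤ d}, where X is the multiset of all processing times and P their sum. -/

import Mathlib

lemma le_map_exists {α β : Type*} [DecidableEq α] [DecidableEq β] {f : α → β} (Y : Multiset β) :
    ∀ s : Multiset α, Y ≤ s.map f → ∃ t ≤ s, t.map f = Y := by
  induction Y using Multiset.induction_on with
  | empty => exact fun s _ => ⟨0, Multiset.zero_le s, rfl⟩
  | cons b Y ih =>
    intro s h
    have hb : b ∈ s.map f := Multiset.mem_of_le h (Multiset.mem_cons_self b Y)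
    obtain ⟨a, ha, rfl⟩ := Multiset.mem_map.mp hb
    have hs : s = a ::ₘ s.erase a := (Multiset.cons_erase ha).symm
    have h' : Y ≤ (s.erase a).map f := by
      have := Multiset.erase_le_erase (f a) h
      simpa [Multiset.map_erase_of_mem _ _ ha] using this
    obtain ⟨t, ht, rfl⟩ := ih (s.erase a) h'
    exact ⟨a ::ₘ t, by rw [hs]; exact Multiset.cons_le_cons a ht, by simp⟩



/-- The set of all sub-multiset sums of a multiset of natural numbers. -/
def subsetSums (X : Multiset ℕ) : Set ℕ := {s | ∃ Y ≤ X, Y.sum = s}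

/-- Completion time of job `j` in schedule `σ`. -/
def completion (n : ℕ) (p : Fin n → ℕ) (σ : Equiv.Perm (Fin n)) (j : Fin n) : ℕ :=
  ∑ i ∈ Finset.univ.filter (fun i => σ i ≤ σ j), p i

/-- Total processing time of tardy jobs in `σ`, all jobs having common due date `d`. -/
def cost (n : ℕ) (p : Fin n → ℕ) (d : ℕ) (σ : Equiv.Perm (Fin n)) : ℕ :=
  ∑ j ∈ Finset.univ.filter (fun j => d < completion n p σ j), p j

/-- For the common-due-date problem `1|dⱼ=d|Σ pⱼUⱼ`, the minimum total
processing time of tardy jobs equals `P − max{s ∈ 𝒮(X) : s ≤ d}`, where `X` is the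
multiset of all processing times and `P` their sum. -/
theorem common_due_date_subset_sum (n : ℕ) (p : Fin n → ℕ) (d : ℕ) :
    IsLeast {c | ∃ σ : Equiv.Perm (Fin n), c = cost n p d σ}
      ((∑ j, p j) - sSup {s ∈ subsetSums (Multiset.map p Finset.univ.val) | s ≤ d}) := by
  set S : Set ℕ := {s ∈ subsetSums (Multiset.map p Finset.univ.val) | s ≤ d} with hS
  have hmemS : ∀ s, s ∈ S ↔ (∃ A : Finset (Fin n), ∑ j ∈ A, p j = s) ∧ s ≤ d := by
    intro s
    constructor
    · rintro ⟨⟨Y, hY, rfl⟩, hle⟩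
      obtain ⟨t, ht, rfl⟩ := le_map_exists Y Finset.univ.val hY
      refine ⟨⟨⟨t, Multiset.nodup_of_le ht Finset.univ.nodup⟩, rfl⟩, hle⟩
    · rintro ⟨⟨A, rfl⟩, hle⟩
      exact ⟨⟨A.val.map p,
        Multiset.map_le_map (Finset.val_le_iff.mpr (Finset.subset_univ A)), rfl⟩, hle⟩
  -- the on-time sum of any schedule is in S
  have honTime : ∀ σ : Equiv.Perm (Fin n),
      (∑ j ∈ Finset.univ.filter (fun j => ¬ d < completion n p σ j), p j) ∈ S := by
    intro σ
    set E := Finset.univ.filter (fun j => ¬ d < completion n p σ j) with hE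
    refine (hmemS _).mpr ⟨⟨E, rfl⟩, ?_⟩
    rcases E.eq_empty_or_nonempty with h | h
    · simp [h]
    · obtain ⟨j, hjE, hjmax⟩ := Finset.exists_max_image E (fun i => σ i) h
      have hsub : E ⊆ Finset.univ.filter (fun i => σ i ≤ σ j) := by
        intro i hi
        simp only [Finset.mem_filter, Finset.mem_univ, true_and]
        exact hjmax i hi
      have h1 : ∑ i ∈ E, p i ≤ completion n p σ j :=
        Finset.sum_le_sum_of_subset hsub
      have h2 : ¬ d < completion n p σ j := by
        have := hjE; rw [hE] at this
        simpa using (Finset.mem_filter.mp this).2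
      omega
  have hbdd : BddAbove S := ⟨d, fun s hs => hs.2⟩
  have hne : S.Nonempty := ⟨0, (hmemS 0).mpr ⟨⟨∅, by simp⟩, Nat.zero_le d⟩⟩
  have hm : sSup S ∈ S := Nat.sSup_mem hne hbdd
  obtain ⟨⟨A, hA⟩, hmd⟩ := (hmemS _).mp hm
  constructor
  · -- membership: construct the schedule placing A first
    set g : Fin n → ℕ := fun j => if j ∈ A then 0 else 1 with hg
    set σ : Equiv.Perm (Fin n) := (Tuple.sort g)⁻¹ with hσ
    set E := Finset.univ.filter (fun j => ¬ d < completion n p σ j) with hE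
    have hAE : A ⊆ E := by
      intro j hj
      have hcomp : completion n p σ j ≤ d := by
        have hsub : Finset.univ.filter (fun i => σ i ≤ σ j) ⊆ A := by
          intro i hi
          have hle : σ i ≤ σ j := (Finset.mem_filter.mp hi).2
          have hmono := Tuple.monotone_sort g hle
          simp only [Function.comp_apply, hσ] at hmono
          rw [Equiv.Perm.inv_def, Equiv.apply_symm_apply, Equiv.apply_symm_apply] at hmono
          by_contra hiA
          simp [hg, hiA, hj] at hmono
        calc completion n p σ j ≤ ∑ i ∈ A, p i := Finset.sum_le_sum_of_subset hsub
          _ ≤ d := by omega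
      rw [hE]
      simp [hcomp, Nat.not_lt.mpr hcomp]
    have hEle : ∑ j ∈ E, p j ≤ sSup S := le_csSup hbdd (honTime σ)
    have hAle : ∑ j ∈ A, p j ≤ ∑ j ∈ E, p j := Finset.sum_le_sum_of_subset hAE
    have hEeq : ∑ j ∈ E, p j = sSup S := by omega
    have hsplit := Finset.sum_filter_add_sum_filter_not Finset.univ
      (fun j => d < completion n p σ j) p
    refine ⟨σ, ?_⟩
    have htot : (∑ j, p j) = cost n p d σ + ∑ j ∈ E, p j := by
      rw [cost, hE]; exact hsplit.symm
    rw [htot, hEeq, Nat.add_sub_cancel]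
  · rintro c ⟨σ, rfl⟩
    have hEle : (∑ j ∈ Finset.univ.filter (fun j => ¬ d < completion n p σ j), p j) ≤ sSup S :=
      le_csSup hbdd (honTime σ)
    have hsplit := Finset.sum_filter_add_sum_filter_not Finset.univ
      (fun j => d < completion n p σ j) p
    rw [cost]
    omega
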